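/- Let e : [0,∞) → ℝ^m be absolutely continuous and ψ : [0,∞) → ℝ continuously differentiable with inf ψ > 0. Suppose on an interval [t_i, t_i + τ] the differential inequality d/dt (‖e(t)‖/ψ(t)) ≤ κ₁ holds whenever ‖e(t)‖/ψ(t) ≤ 1, and suppose ‖e(t_i)‖/ψ(t_i) ≤ 1 - τκ₁. Then ‖e(t)‖ ≤ ψ(t) for all t ∈ [t_i, t_i + τ]. -/

import Mathlib

theorem stmt_3 {m : ℕ} (e : ℝ → EuclideanSpace ℝ (Fin m)) (ψ : ℝ → ℝ)
    (ti τ κ₁ : ℝ) (hτ : 0 < τ) (hκ₁ : 0 < κ₁)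
    (hψpos : ∀ t, 0 < ψ t)
    (z' : ℝ → ℝ)
    (hz : ∀ t ∈ Set.Icc ti (ti + τ),
      HasDerivWithinAt (fun s => ‖e s‖ / ψ s) (z' t) (Set.Icc ti (ti + τ)) t)
    (hineq : ∀ t ∈ Set.Icc ti (ti + τ), ‖e t‖ / ψ t ≤ 1 → z' t ≤ κ₁)
    (h0 : ‖e ti‖ / ψ ti ≤ 1 - τ * κ₁) :
    ∀ t ∈ Set.Icc ti (ti + τ), ‖e t‖ ≤ ψ t := by
  set g : ℝ → ℝ := fun s => ‖e s‖ / ψ s with hg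
  have hcont : ContinuousOn g (Set.Icc ti (ti + τ)) :=
    fun t ht => (hz t ht).continuousWithinAt
  -- key estimate: if g ≤ 1 on [ti, T] except possibly at T, then g T ≤ g ti + κ₁ (T - ti)
  have key : ∀ T ∈ Set.Icc ti (ti + τ), (∀ s ∈ Set.Ioo ti T, g s ≤ 1) →
      g T ≤ g ti + κ₁ * (T - ti) := by
    intro T hT hle
    have hsub : Set.Icc ti T ⊆ Set.Icc ti (ti + τ) :=
      Set.Icc_subset_Icc le_rfl hT.2
    have hmono : MonotoneOn (fun t => κ₁ * t - g t) (Set.Icc ti T) := by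
      apply monotoneOn_of_hasDerivWithinAt_nonneg (f' := fun t => κ₁ - z' t)
        (convex_Icc ti T)
      · exact ((continuousOn_const.mul continuousOn_id).sub (hcont.mono hsub))
      · intro x hx
        rw [interior_Icc] at hx
        have hx' : x ∈ Set.Icc ti (ti + τ) := hsub (Set.Ioo_subset_Icc_self hx)
        have hd := ((hasDerivAt_id x).const_mul κ₁).hasDerivWithinAt.sub
          ((hz x hx').mono (fun y hy => hsub (Set.Ioo_subset_Icc_self hy)))
        rw [interior_Icc]
        exact hd.congr_deriv (by ring)
      · intro x hx
        rw [interior_Icc] at hx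
        have hx' : x ∈ Set.Icc ti (ti + τ) := hsub (Set.Ioo_subset_Icc_self hx)
        have := hineq x hx' (hle x hx)
        linarith
    have := hmono (Set.left_mem_Icc.2 hT.1) (Set.right_mem_Icc.2 hT.1) hT.1
    simp only at this
    linarith
  -- claim: g ≤ 1 on the interval
  have claim : ∀ t ∈ Set.Icc ti (ti + τ), g t ≤ 1 := by
    by_contra hcon
    push_neg at hcon
    obtain ⟨t₁, ht₁, hgt₁⟩ := hcon
    set B : Set ℝ := Set.Icc ti t₁ ∩ g ⁻¹' Set.Ici 1 with hB
    have hBne : B.Nonempty := ⟨t₁, Set.right_mem_Icc.2 ht₁.1, le_of_lt hgt₁⟩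
    have hBclosed : IsClosed B :=
      (hcont.mono (Set.Icc_subset_Icc le_rfl ht₁.2)).preimage_isClosed_of_isClosed
        isClosed_Icc isClosed_Ici
    have hBbdd : BddBelow B := ⟨ti, fun x hx => hx.1.1⟩
    set T := sInf B with hT
    have hTB : T ∈ B := hBclosed.csInf_mem hBne hBbdd
    have hTmem : T ∈ Set.Icc ti (ti + τ) := ⟨hTB.1.1, hTB.1.2.trans ht₁.2⟩
    have hlt : ∀ s ∈ Set.Ioo ti T, g s ≤ 1 := by
      intro s hs
      by_contra hgs
      push_neg at hgs
      have hsB : s ∈ B :=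
        ⟨⟨le_of_lt hs.1, hs.2.le.trans hTB.1.2⟩, le_of_lt hgs⟩
      exact absurd (csInf_le hBbdd hsB) (not_le.2 hs.2)
    have hgT : g T ≤ g ti + κ₁ * (T - ti) := key T hTmem hlt
    have h1T : (1 : ℝ) ≤ g T := hTB.2
    -- so ti + τ ≤ T, hence T = ti + τ = t₁
    have hτT : ti + τ ≤ T := by nlinarith [hκ₁]
    have hTeq : T = ti + τ := le_antisymm hTmem.2 hτT
    have ht₁T : t₁ = T := le_antisymm (hTeq ▸ ht₁.2) hTB.1.2
    have : g t₁ ≤ 1 := by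
      rw [ht₁T]
      have : g T ≤ g ti + κ₁ * τ := by rw [hTeq] at hgT ⊢; linarith [hgT]
      linarith
    linarith
  intro t ht
  have := claim t ht
  have hψ := hψpos t
  rw [hg] at this
  simp only [div_le_one hψ] at this
  exact this
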